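/- arXiv:1501.04804 — 2 statements merged into one kernel-verified Lean document; each statement's English description precedes it below -/
import Mathlib

section
/- Let $X=xe^{\mathbf{i}\theta}\in\mathbb{R}^2$ with $x>0$ and $0\le\theta\le\theta_0$, and let $\rho>0$, $l$ with $\rho\le l\le x/2$. Consider the horizontal cylinder $U=X+[-l;0]\times[-\rho;\rho]$ and the radial cylinder $\mathrm{Cyl}(X,\rho)=([O;X]\oplus B(O,\rho))\cap B(O,x)$. Then there are constants $c_0,x_0,\theta_0>0$ depending only on $\rho$ such that for $x\ge x_0$ and $\theta\le\theta_0$, the area of the symmetric-difference-type region $(X+[-l;0]\times[-\rho;\rho])\setminus\mathrm{Cyl}(X,\rho)$ is at most $c_0(l^2\theta+1/x)$. -/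
open Real MeasureTheory Pointwise

lemma volume_reIm_rect (a b c d : ℝ) :
    volume {z : ℂ | z.re ∈ Set.Icc a b ∧ z.im ∈ Set.Icc c d}
      = ENNReal.ofReal (b - a) * ENNReal.ofReal (d - c) := by
  have h : {z : ℂ | z.re ∈ Set.Icc a b ∧ z.im ∈ Set.Icc c d}
      = Complex.measurableEquivRealProd ⁻¹' (Set.Icc a b ×ˢ Set.Icc c d) := rfl
  rw [h, Complex.volume_preserving_equiv_real_prod.measure_preimage
    (measurableSet_Icc.prod measurableSet_Icc).nullMeasurableSet]
  rw [Measure.volume_eq_prod, Measure.prod_prod, Real.volume_Icc, Real.volume_Icc]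

lemma complex_norm_sq' (w : ℂ) : ‖w‖^2 = w.re^2 + w.im^2 := by
  rw [Complex.sq_norm, Complex.normSq_apply]; ring


-- t ≥ 0
lemma aux_t0 (x l ρ c s a b : ℝ) (hpyth : s^2 + c^2 = 1)
    (hr1 : x*c - l ≤ a) (hβl : -ρ ≤ b - x*s) (hs0 : 0 ≤ s) (hsin1 : s ≤ 1)
    (hc0 : 0 ≤ c) (hc1 : c ≤ 1) (hl0 : 0 ≤ l) (hρ0 : 0 ≤ ρ) (hlρx : l + ρ ≤ x) :
    0 ≤ a*c + b*s := by
  nlinarith [mul_nonneg (by linarith : (0:ℝ) ≤ a - (x*c - l)) hc0,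
    mul_nonneg (by linarith : (0:ℝ) ≤ b - (x*s - ρ)) hs0,
    mul_le_of_le_one_right hl0 hc1, mul_le_of_le_one_right hρ0 hsin1]

-- |s-coordinate| < ρ
lemma aux_s (x l ρ c s a b : ℝ)
    (h2 : b < x*s + ρ - l*s) (h3 : x*s - ρ + l*s < b)
    (hr1 : x*c - l ≤ a) (hr2 : a ≤ x*c) (hs0 : 0 ≤ s) (hc0 : 0 < c) (hc1 : c ≤ 1)
    (hρ0 : 0 < ρ) :
    (b*c - a*s)^2 < ρ^2 := by
  have hρls : 0 ≤ ρ - l*s := by linarith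
  have h1c : 0 ≤ (ρ - l*s) * (1 - c) := mul_nonneg hρls (by linarith)
  have hαs : (x*c - a) * s ≤ l * s := mul_le_mul_of_nonneg_right (by linarith) hs0
  have hαs0 : 0 ≤ (x*c - a) * s := mul_nonneg (by linarith) hs0
  have hs1 : b*c - a*s < ρ := by nlinarith [mul_lt_mul_of_pos_left h2 hc0]
  have hs2 : -ρ < b*c - a*s := by nlinarith [mul_lt_mul_of_pos_left h3 hc0]
  nlinarith [mul_pos (by linarith : (0:ℝ) < ρ - (b*c - a*s)) (by linarith : (0:ℝ) < ρ + (b*c - a*s))]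

-- the S1 width bound: x*c - a ≤ 4ρθ + 2ρ²/x
lemma aux_w (x θ ρ c s a b : ℝ) (hpyth : s^2 + c^2 = 1)
    (hx2 : x^2 ≤ a^2 + b^2) (hβl : -ρ ≤ b - x*s) (hβu : b - x*s ≤ ρ)
    (hs0 : 0 ≤ s) (hsθ : s ≤ θ) (hchalf : 1/2 ≤ c) (ha0 : 0 ≤ a)
    (hρ0 : 0 < ρ) (hx0 : 0 < x) (hθ0 : 0 ≤ θ) :
    x*c - a ≤ 4*ρ*θ + 2*ρ^2 * (1/x) := by
  have hβsq : (b - x*s)^2 ≤ ρ^2 := by nlinarith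
  have hβxs : (b - x*s) * (x*s) ≤ ρ * (x * s) :=
    mul_le_mul_of_nonneg_right hβu (mul_nonneg hx0.le hs0)
  have hρxs : ρ * (x * s) ≤ ρ * (x * θ) :=
    mul_le_mul_of_nonneg_left (mul_le_mul_of_nonneg_left hsθ hx0.le) hρ0.le
  have hkey : (x*c - a)*(x*c + a) ≤ 2*ρ*x*θ + ρ^2 := by nlinarith
  have hxc : x/2 ≤ x*c := by nlinarith
  have hk : (x*c - a) * x ≤ 4*ρ*θ*x + 2*ρ^2 := by
    rcases le_or_gt (x*c - a) 0 with h | h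
    · nlinarith [mul_nonneg (neg_nonneg.2 h) hx0.le,
        mul_nonneg (mul_nonneg (mul_nonneg (by norm_num : (0:ℝ) ≤ 4) hρ0.le) hθ0) hx0.le]
    · have h5 : (x*c - a) * (x/2) ≤ (x*c - a) * (x*c + a) :=
        mul_le_mul_of_nonneg_left (by linarith) h.le
      nlinarith
  have hinv : x * (1/x) = 1 := by field_simp
  nlinarith [mul_pos hx0 (by positivity : (0:ℝ) < 1/x)]

-- final arithmetic
lemma aux_final (x θ ρ l s : ℝ) (hρ0 : 0 < ρ) (hρl : ρ ≤ l) (hθ0 : 0 ≤ θ)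
    (hs0 : 0 ≤ s) (hsθ : s ≤ θ) (hx0 : 0 < x) :
    (4*ρ*θ + 2*ρ^2 * (1/x)) * (2*ρ) + (l * (l*s) + l * (l*s))
      ≤ (10 + 4*ρ^3) * (l^2*θ + 1/x) := by
  have h1x : (0:ℝ) ≤ 1/x := by positivity
  have hlρ2 : 0 ≤ θ * (l^2 - ρ^2) := mul_nonneg hθ0 (by nlinarith)
  have hlθs : 0 ≤ l^2 * (θ - s) := mul_nonneg (sq_nonneg l) (by linarith)
  nlinarith [mul_nonneg (mul_nonneg (mul_nonneg hρ0.le (mul_nonneg hρ0.le hρ0.le)) (sq_nonneg l)) hθ0]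

set_option maxHeartbeats 1000000 in
/-- Deterministic area estimate: for `X = x e^{iθ}` with `x` large and `θ` small, the
part of the horizontal rectangle `X + [-l;0] × [-ρ;ρ]` lying outside the radial cylinder
`Cyl(X,ρ) = ([0;X] ⊕ B(0,ρ)) ∩ B(0,x)` has area at most `c₀ (l²θ + 1/x)`, for
`ρ ≤ l ≤ x/2`, with constants depending only on `ρ`. -/
theorem rectangle_minus_cylinder_area (ρ : ℝ) (hρ : 0 < ρ) :
    ∃ c₀ x₀ θ₀ : ℝ, 0 < c₀ ∧ 0 < x₀ ∧ 0 < θ₀ ∧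
      ∀ x θ l : ℝ, x₀ ≤ x → 0 ≤ θ → θ ≤ θ₀ → ρ ≤ l → l ≤ x / 2 →
        (volume
          ({z : ℂ | x * Real.cos θ - l ≤ z.re ∧ z.re ≤ x * Real.cos θ ∧
              |z.im - x * Real.sin θ| ≤ ρ} \
            ((segment ℝ 0 ((x : ℂ) * Complex.exp ((θ : ℂ) * Complex.I))
                + Metric.ball (0 : ℂ) ρ) ∩ Metric.ball (0 : ℂ) x))).toReal
          ≤ c₀ * (l ^ 2 * θ + 1 / x) := by
  refine ⟨10 + 4 * ρ^3, 1, 1, by positivity, one_pos, one_pos, ?_⟩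
  intro x θ l hx hθ0 hθ1 hρl hlx
  have hx0 : (0:ℝ) < x := lt_of_lt_of_le one_pos hx
  have hl0 : (0:ℝ) < l := lt_of_lt_of_le hρ hρl
  have hs0 : 0 ≤ Real.sin θ :=
    Real.sin_nonneg_of_nonneg_of_le_pi hθ0 (hθ1.trans (by linarith [Real.pi_gt_three]))
  have hsθ : Real.sin θ ≤ θ := Real.sin_le hθ0
  have hsin1 : Real.sin θ ≤ 1 := Real.sin_le_one θ
  have hc1 : Real.cos θ ≤ 1 := Real.cos_le_one θ
  have hchalf : 1/2 ≤ Real.cos θ := by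
    have := Real.one_sub_sq_div_two_le_cos (x := θ)
    nlinarith
  have hpyth : Real.sin θ ^ 2 + Real.cos θ ^ 2 = 1 := Real.sin_sq_add_cos_sq θ
  set c := Real.cos θ
  set s := Real.sin θ
  set X : ℂ := (x : ℂ) * Complex.exp ((θ:ℂ) * Complex.I) with hXdef
  have hXre : X.re = x * c := by
    simp [hXdef, Complex.exp_mul_I, Complex.cos_ofReal_re, Complex.sin_ofReal_re, c, s]
  have hXim : X.im = x * s := by
    simp [hXdef, Complex.exp_mul_I, Complex.cos_ofReal_re, Complex.sin_ofReal_re, c, s]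
  set w : ℝ := 4*ρ*θ + 2*ρ^2 * (1/x) with hwdef
  have hw0 : 0 ≤ w := by positivity
  set S1 := {z : ℂ | z.re ∈ Set.Icc (x*c - w) (x*c) ∧ z.im ∈ Set.Icc (x*s - ρ) (x*s + ρ)}
    with hS1
  set S2 := {z : ℂ | z.re ∈ Set.Icc (x*c - l) (x*c)
      ∧ z.im ∈ Set.Icc (x*s + ρ - l*s) (x*s + ρ)} with hS2
  set S3 := {z : ℂ | z.re ∈ Set.Icc (x*c - l) (x*c)
      ∧ z.im ∈ Set.Icc (x*s - ρ) (x*s - ρ + l*s)} with hS3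
  have hsub : ({z : ℂ | x * c - l ≤ z.re ∧ z.re ≤ x * c ∧ |z.im - x * s| ≤ ρ} \
      ((segment ℝ 0 X + Metric.ball (0 : ℂ) ρ) ∩ Metric.ball (0 : ℂ) x))
      ⊆ S1 ∪ S2 ∪ S3 := by
    rintro z ⟨⟨hr1, hr2, hr3⟩, hnc⟩
    obtain ⟨hβl, hβu⟩ := abs_le.mp hr3
    set a := z.re with ha
    set b := z.im with hb
    by_cases h2 : x*s + ρ - l*s ≤ b
    · exact Or.inl (Or.inr ⟨⟨hr1, hr2⟩, h2, by linarith⟩)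
    by_cases h3 : b ≤ x*s - ρ + l*s
    · exact Or.inr ⟨⟨hr1, hr2⟩, by linarith, h3⟩
    push_neg at h2 h3
    have hxc2 : x * (1/2) ≤ x * c := mul_le_mul_of_nonneg_left hchalf hx0.le
    by_cases hball : ‖z‖ < x
    · exfalso
      apply hnc
      set t := a * c + b * s with htdef
      have habs2 : a^2 + b^2 = (‖z‖)^2 := by
        rw [Complex.sq_norm, Complex.normSq_apply]; ring
      have ht0 : 0 ≤ t := aux_t0 x l ρ c s a b hpyth hr1 hβl hs0 hsin1
        (by linarith) hc1 hl0.le hρ.le (by linarith)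
      have habslt : (‖z‖)^2 < x^2 :=
        pow_lt_pow_left₀ hball (norm_nonneg z) two_ne_zero
      have hid2 : t^2 + (b*c - a*s)^2 = a^2 + b^2 := by
        rw [htdef]; linear_combination (a^2 + b^2) * hpyth
      have htx : t ≤ x := by
        refine le_of_lt (lt_of_pow_lt_pow_left₀ 2 hx0.le ?_)
        have := sq_nonneg (b*c - a*s)
        linarith [habs2, habslt]
      have hpmem : (t/x) • X ∈ segment ℝ 0 X := by
        rw [segment_eq_image]
        exact ⟨t/x, ⟨div_nonneg ht0 hx0.le, div_le_one_of_le₀ htx hx0.le⟩, by simp⟩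
      have hpre : ((t/x) • X).re = t * c := by
        rw [Complex.smul_re, hXre, smul_eq_mul]; field_simp
      have hpim : ((t/x) • X).im = t * s := by
        rw [Complex.smul_im, hXim, smul_eq_mul]; field_simp
      have hzp : ‖z - (t/x) • X‖^2 = (b*c - a*s)^2 := by
        rw [complex_norm_sq', Complex.sub_re, Complex.sub_im, hpre, hpim, ← ha, ← hb, htdef]
        linear_combination ((a*c+b*s)^2 - a^2 - b^2) * hpyth
      have hslt : (b*c - a*s)^2 < ρ^2 :=
        aux_s x l ρ c s a b h2 h3 hr1 hr2 hs0 (by linarith) hc1 hρ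
      constructor
      · have hzsplit : z = (t/x) • X + (z - (t/x) • X) := by ring
        rw [hzsplit]
        refine Set.add_mem_add hpmem ?_
        rw [Metric.mem_ball, dist_zero_right]
        refine lt_of_pow_lt_pow_left₀ 2 hρ.le ?_
        rw [hzp]; exact hslt
      · rw [Metric.mem_ball, dist_zero_right]; exact hball
    · have habs : x ≤ ‖z‖ := le_of_not_gt hball
      have habs2 : a^2 + b^2 = (‖z‖)^2 := by
        rw [ha, hb, Complex.sq_norm, Complex.normSq_apply]; ring
      have hx2 : x^2 ≤ a^2 + b^2 := by
        rw [habs2]; exact pow_le_pow_left₀ hx0.le habs 2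
      have ha0 : 0 ≤ a := by linarith
      have hlow : x*c - w ≤ a := by
        have := aux_w x θ ρ c s a b hpyth hx2 hβl hβu hs0 hsθ hchalf ha0 hρ hx0 hθ0
        rw [hwdef]; linarith
      exact Or.inl (Or.inl ⟨⟨hlow, hr2⟩, by linarith, by linarith⟩)
  have hvol : volume ({z : ℂ | x * c - l ≤ z.re ∧ z.re ≤ x * c ∧ |z.im - x * s| ≤ ρ} \
      ((segment ℝ 0 X + Metric.ball (0 : ℂ) ρ) ∩ Metric.ball (0 : ℂ) x))
      ≤ ENNReal.ofReal ((10 + 4*ρ^3) * (l^2*θ + 1/x)) := by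
    refine le_trans (measure_mono hsub) ?_
    refine le_trans (measure_union_le _ _) ?_
    refine le_trans (add_le_add (measure_union_le _ _) le_rfl) ?_
    rw [hS1, hS2, hS3, volume_reIm_rect, volume_reIm_rect, volume_reIm_rect]
    have e1 : x*c - (x*c - w) = w := by ring
    have e2 : x*s + ρ - (x*s - ρ) = 2*ρ := by ring
    have e3 : x*c - (x*c - l) = l := by ring
    have e4 : x*s + ρ - (x*s + ρ - l*s) = l*s := by ring
    have e5 : x*s - ρ + l*s - (x*s - ρ) = l*s := by ring
    rw [e1, e2, e3, e4, e5]
    have hls0 : 0 ≤ l * s := mul_nonneg hl0.le hs0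
    rw [← ENNReal.ofReal_mul hw0, ← ENNReal.ofReal_mul hl0.le, ← ENNReal.ofReal_add
      (by positivity) (by positivity), ← ENNReal.ofReal_add (by positivity) (by positivity)]
    refine ENNReal.ofReal_le_ofReal ?_
    have := aux_final x θ ρ l s hρ hρl hθ0 hs0 hsθ hx0
    rw [hwdef]
    linarith
  have hrhs0 : (0:ℝ) ≤ (10 + 4*ρ^3) * (l^2*θ + 1/x) := by
    have h1x : (0:ℝ) ≤ 1/x := by positivity
    have h2 : (0:ℝ) ≤ l^2*θ := mul_nonneg (sq_nonneg l) hθ0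
    have hc0 : (0:ℝ) ≤ 10 + 4*ρ^3 := by nlinarith [mul_nonneg (mul_nonneg hρ.le hρ.le) hρ.le]
    nlinarith [mul_nonneg hc0 (by linarith : (0:ℝ) ≤ l^2*θ + 1/x)]
  exact ENNReal.toReal_le_of_le_ofReal hrhs0 hvol
end

section
/- Let $X\in(\mathbb{R}_+)^2$, let $\mathcal{D}$ be the horizontal line through $X$, $\mathcal{D}'$ the tangent line to the circle $S(O,|X|)$ at $X$, and $\mathcal{D}''$ the image of $\mathcal{D}$ under reflection across the line $(OX)$. Then $\mathcal{D}'$ is the angle bisector line of $\mathcal{D}$ and $\mathcal{D}''$ at $X$; consequently, for any point $A$ and its reflection $\mathrm{Sym}\,A$ across $(OX)$, one has $d(A,\mathcal{D})=d(\mathrm{Sym}\,A,\mathcal{D}'')$, and if $\mathrm{Sym}\,A$ lies on the same side as $\mathcal{D}''$ relative to $\mathcal{D}'$, then $d(A,\mathcal{D})\le d(\mathrm{Sym}\,A,\mathcal{D})$. -/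
open Real

lemma infDist_horiz (A : ℂ) (c : ℝ) :
    Metric.infDist A {z : ℂ | z.im = c} = |A.im - c| := by
  have hne : Set.Nonempty {z : ℂ | z.im = c} := ⟨⟨0, c⟩, rfl⟩
  apply le_antisymm
  · have hm : (⟨A.re, c⟩ : ℂ) ∈ {z : ℂ | z.im = c} := rfl
    refine le_trans (Metric.infDist_le_dist_of_mem hm) ?_
    rw [Complex.dist_eq_re_im]
    simp [Real.sqrt_sq_eq_abs]
  · by_contra h
    push_neg at h
    obtain ⟨y, hy, hlt⟩ := (Metric.infDist_lt_iff hne).1 h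
    have hle : |A.im - c| ≤ dist A y := by
      rw [Complex.dist_eq]
      have hy' : y.im = c := hy
      have := Complex.abs_im_le_norm (A - y)
      simpa [Complex.sub_im, hy'] using this
    linarith

/-- Plane geometry behind the star-ancestor comparison: let `X` be a point of the first
quadrant, `D` the horizontal line through `X`, `D'` the tangent to the circle `S(0,|X|)`
at `X`, `Sym` the reflection across the line `(0X)` and `D'' = Sym(D)`. Then the
reflection across `D'` maps `D` onto `D''` (i.e. `D'` bisects `D` and `D''` at `X`);
`d(A, D) = d(Sym A, D'')` for every `A`; and if `Sym A` lies on the side of `D'`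
containing the relevant half of `D''` (on the disk side of `D'`, with abscissa at least
that of `X`), then `d(A, D) ≤ d(Sym A, D)`. -/
theorem tangent_bisector_reflection (X : ℂ) (hX : X ≠ 0)
    (hre : 0 ≤ X.re) (him : 0 ≤ X.im) :
    (((fun z => X - X / (starRingEnd ℂ X) * starRingEnd ℂ (z - X)) ''
        {z : ℂ | z.im = X.im})
      = (fun z => X / (starRingEnd ℂ X) * starRingEnd ℂ z) '' {z : ℂ | z.im = X.im}) ∧
    (∀ A : ℂ, Metric.infDist A {z : ℂ | z.im = X.im}
      = Metric.infDist (X / (starRingEnd ℂ X) * starRingEnd ℂ A)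
          ((fun z => X / (starRingEnd ℂ X) * starRingEnd ℂ z) '' {z : ℂ | z.im = X.im})) ∧
    (∀ A : ℂ,
      (starRingEnd ℂ X * (X / (starRingEnd ℂ X) * starRingEnd ℂ A - X)).re ≤ 0 →
      X.re ≤ (X / (starRingEnd ℂ X) * starRingEnd ℂ A).re →
      Metric.infDist A {z : ℂ | z.im = X.im}
        ≤ Metric.infDist (X / (starRingEnd ℂ X) * starRingEnd ℂ A)
            {z : ℂ | z.im = X.im}) := by
  have hXc : (starRingEnd ℂ X) ≠ 0 := by
    simpa using hX
  have key : ∀ z : ℂ, X - X / (starRingEnd ℂ X) * starRingEnd ℂ (z - X)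
      = X / (starRingEnd ℂ X) * starRingEnd ℂ (2 * X - z) := by
    intro z
    rw [map_sub, map_sub, map_mul, map_ofNat]
    field_simp
    ring
  have him2 : ∀ z : ℂ, z.im = X.im → (2 * X - z).im = X.im := by
    intro z hz
    simp [Complex.sub_im, Complex.mul_im, hz]
    ring
  refine ⟨?_, ?_, ?_⟩
  · ext y
    constructor
    · rintro ⟨z, hz, rfl⟩
      exact ⟨2 * X - z, him2 z hz, (key z).symm⟩
    · rintro ⟨z, hz, rfl⟩
      refine ⟨2 * X - z, him2 z hz, ?_⟩
      have := key (2 * X - z)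
      simpa using this
  · intro A
    have hiso : Isometry (fun z : ℂ => X / (starRingEnd ℂ X) * starRingEnd ℂ z) := by
      apply Isometry.of_dist_eq
      intro a b
      have habs : ‖X / starRingEnd ℂ X‖ = 1 := by
        rw [norm_div, Complex.norm_conj, div_self (norm_ne_zero_iff.mpr hX)]
      simp only [Complex.dist_eq, ← mul_sub, ← map_sub, norm_mul, habs, one_mul,
        Complex.norm_conj]
    exact (Metric.infDist_image hiso (x := A) (t := {z : ℂ | z.im = X.im})).symm
  · intro A h1 h2
    set B : ℂ := X / (starRingEnd ℂ X) * starRingEnd ℂ A with hB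
    have hconj : starRingEnd ℂ X * (A - X) = X * starRingEnd ℂ (B - X) := by
      rw [hB, map_sub, map_mul, map_div₀, Complex.conj_conj, Complex.conj_conj]
      field_simp
    -- coordinates
    set a := X.re
    set b := X.im
    have hE := hconj
    rw [Complex.ext_iff] at hE
    obtain ⟨hE2, hE1⟩ := hE
    simp only [Complex.mul_re, Complex.mul_im, Complex.sub_re, Complex.sub_im,
      Complex.conj_re, Complex.conj_im] at hE1 hE2
    simp only [Complex.mul_re, Complex.sub_re, Complex.sub_im, Complex.conj_re,
      Complex.conj_im] at h1
    set p := B.re - a with hp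
    set q := B.im - b with hq
    set s := A.re - a
    set t := A.im - b
    have H1 : a * p + b * q ≤ 0 := by
      have : a * (B.re - a) - -b * (B.im - b) ≤ 0 := h1
      rw [hp, hq]; linarith
    have H2 : 0 ≤ p := by rw [hp]; linarith
    have hE1' : a * t - b * s = b * p - a * q := by
      simp only [s, t, p, q] at *
      linarith
    have hE2' : a * s + b * t = a * p + b * q := by
      simp only [s, t, p, q] at *
      linarith
    have hn : 0 < a ^ 2 + b ^ 2 := by
      rcases Complex.ext_iff.not.1 hX with h
      have : a ≠ 0 ∨ b ≠ 0 := by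
        by_contra hc
        push_neg at hc
        exact hX (Complex.ext hc.1 hc.2)
      rcases this with h | h
      · positivity
      · positivity
    have ht : (a ^ 2 + b ^ 2) * t = 2 * a * b * p + (b ^ 2 - a ^ 2) * q := by
      linear_combination a * hE1' + b * hE2'
    have hK : (a ^ 2 - b ^ 2) * p + 2 * a * b * q ≤ -((a ^ 2 + b ^ 2) * p) := by
      nlinarith [mul_nonneg hre (neg_nonneg.mpr H1)]
    have hnp : 0 ≤ (a ^ 2 + b ^ 2) * p := mul_nonneg hn.le H2
    have hK2 : ((a ^ 2 + b ^ 2) * p) ^ 2 ≤ ((a ^ 2 - b ^ 2) * p + 2 * a * b * q) ^ 2 := by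
      nlinarith [hK, hnp]
    have hid : ((a ^ 2 + b ^ 2) * t) ^ 2 + ((a ^ 2 - b ^ 2) * p + 2 * a * b * q) ^ 2
        = ((a ^ 2 + b ^ 2)) ^ 2 * (p ^ 2 + q ^ 2) := by
      linear_combination ((a ^ 2 + b ^ 2) * t + (2 * a * b * p + (b ^ 2 - a ^ 2) * q)) * ht
    have htq : t ^ 2 ≤ q ^ 2 := by
      nlinarith [hid, hK2, mul_pos hn hn, hn]
    rw [infDist_horiz, infDist_horiz]
    rw [← Real.sqrt_sq_eq_abs, ← Real.sqrt_sq_eq_abs]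
    exact Real.sqrt_le_sqrt (by simpa [t, q] using htq)
end
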